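/- With the factorized Hamiltonian H = −(1/2) ∑_i (∂_i + ∂_i ln ∏_{l<j} sin^β x_{lj})(∂_i − ∂_i ln ∏_{l<j} sin^β x_{lj}), the expansion H = −(1/2)∑_i ∂_i² + β(β−1) ∑_{i<j} sin^{-2}(x_{ij}) − (1/6) β² N(N+1)(N−1) holds as an identity of differential operators (using the cotangent triple identity). -/

import Mathlib

open Finset

/-- Partial derivative in the `i`-th coordinate of a function of `N` real variables. -/
noncomputable def pd {N : ℕ} (i : Fin N) (f : (Fin N → ℝ) → ℝ) : (Fin N → ℝ) → ℝ :=
  fun x => deriv (fun t => f (Function.update x i t)) (x i)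

/-- `w i x = ∂_i ln ∏_{l<j} sin^β x_{lj} = β ∑_{j ≠ i} cot (x_i - x_j)`. -/
noncomputable def w (N : ℕ) (β : ℝ) (i : Fin N) : (Fin N → ℝ) → ℝ :=
  fun x => β * ∑ j ∈ Finset.univ.filter (fun j : Fin N => j ≠ i), Real.cot (x i - x j)

/-! ### Auxiliary trigonometric lemmas -/

lemma myHasDerivAt_cot {t : ℝ} (h : Real.sin t ≠ 0) :
    HasDerivAt Real.cot (-(1 / Real.sin t ^ 2)) t := by
  have h1 : HasDerivAt (fun y => Real.cos y / Real.sin y)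
      ((-Real.sin t * Real.sin t - Real.cos t * Real.cos t) / Real.sin t ^ 2) t :=
    (Real.hasDerivAt_cos t).div (Real.hasDerivAt_sin t) h
  have h2 : (fun y => Real.cos y / Real.sin y) = Real.cot := by
    funext y; rw [Real.cot_eq_cos_div_sin]
  rw [h2] at h1
  convert h1 using 1
  have hp := Real.sin_sq_add_cos_sq t
  field_simp
  nlinarith [hp]

lemma myCot_neg (y : ℝ) : Real.cot (-y) = -Real.cot y := by
  rw [Real.cot_eq_cos_div_sin, Real.cot_eq_cos_div_sin, Real.cos_neg, Real.sin_neg, div_neg]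

lemma myCot_sq {y : ℝ} (h : Real.sin y ≠ 0) :
    Real.cot y ^ 2 = 1 / Real.sin y ^ 2 - 1 := by
  rw [Real.cot_eq_cos_div_sin]
  have hp := Real.sin_sq_add_cos_sq y
  field_simp
  nlinarith [hp]

lemma cot_triple {a b : ℝ} (ha : Real.sin a ≠ 0) (hb : Real.sin b ≠ 0)
    (hab : Real.sin (a + b) ≠ 0) :
    Real.cot a * Real.cot (a + b) + Real.cot b * Real.cot (a + b)
      - Real.cot a * Real.cot b = -1 := by
  rw [Real.cot_eq_cos_div_sin, Real.cot_eq_cos_div_sin, Real.cot_eq_cos_div_sin]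
  field_simp
  rw [Real.sin_add, Real.cos_add]
  ring

/-! ### Combinatorial lemmas -/

/-- The set of triples of pairwise distinct indices. -/
def D3 (N : ℕ) : Finset (Fin N × Fin N × Fin N) :=
  Finset.univ.filter (fun p => p.1 ≠ p.2.1 ∧ p.1 ≠ p.2.2 ∧ p.2.1 ≠ p.2.2)

lemma nest3 {N : ℕ} (F : Fin N → Fin N → Fin N → ℝ) :
    ∑ p ∈ D3 N, F p.1 p.2.1 p.2.2
      = ∑ i : Fin N, ∑ j ∈ Finset.univ.filter (fun j => j ≠ i),
          ∑ k ∈ Finset.univ.filter (fun k => k ≠ i ∧ k ≠ j), F i j k := by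
  rw [D3, Finset.sum_filter, Fintype.sum_prod_type]
  refine Finset.sum_congr rfl fun i _ => ?_
  rw [Fintype.sum_prod_type, Finset.sum_filter]
  refine Finset.sum_congr rfl fun j _ => ?_
  by_cases hji : j = i
  · subst hji; simp
  · rw [if_pos hji, Finset.sum_filter]
    refine Finset.sum_congr rfl fun k _ => ?_
    by_cases hki : k = i <;> by_cases hkj : k = j <;>
      simp_all [ne_comm, eq_comm]

lemma nest2 {N : ℕ} (F : Fin N → Fin N → ℝ) :
    ∑ p ∈ (Finset.univ : Finset (Fin N × Fin N)).filter (fun p => p.1 ≠ p.2), F p.1 p.2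
      = ∑ i : Fin N, ∑ j ∈ Finset.univ.filter (fun j => j ≠ i), F i j := by
  rw [Finset.sum_filter, Fintype.sum_prod_type]
  refine Finset.sum_congr rfl fun i _ => ?_
  rw [Finset.sum_filter]
  refine Finset.sum_congr rfl fun j _ => ?_
  by_cases hji : j = i
  · subst hji; simp
  · simp [hji, Ne.symm hji]

lemma cyc3 {N : ℕ} (G : Fin N → Fin N → Fin N → ℝ) :
    ∑ p ∈ D3 N, G p.1 p.2.1 p.2.2 = ∑ p ∈ D3 N, G p.2.1 p.2.2 p.1 := by
  refine Finset.sum_nbij' (fun p => (p.2.2, p.1, p.2.1)) (fun p => (p.2.1, p.2.2, p.1))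
    ?_ ?_ ?_ ?_ ?_ <;>
    rintro ⟨a, b, c⟩ hp <;>
    simp only [D3, Finset.mem_filter, Finset.mem_univ, true_and, ne_eq] at * <;>
    tauto

lemma cardA {N : ℕ} (i : Fin N) :
    ((Finset.univ.filter (fun j : Fin N => j ≠ i)).card : ℝ) = (N : ℝ) - 1 := by
  rw [Finset.filter_ne', Finset.card_erase_of_mem (Finset.mem_univ i)]
  rw [Finset.card_univ, Fintype.card_fin]
  have h1 : 1 ≤ N := i.pos
  rw [Nat.cast_sub h1]; norm_num

lemma cardB {N : ℕ} {i j : Fin N} (hji : j ≠ i) :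
    ((Finset.univ.filter (fun k : Fin N => k ≠ i ∧ k ≠ j)).card : ℝ) = (N : ℝ) - 2 := by
  have he : (Finset.univ.filter (fun k : Fin N => k ≠ i ∧ k ≠ j))
      = ((Finset.univ : Finset (Fin N)).erase i).erase j := by
    ext k; simp [and_comm]
  rw [he, Finset.card_erase_of_mem, Finset.card_erase_of_mem (Finset.mem_univ i)]
  · rw [Finset.card_univ, Fintype.card_fin]
    have h2 : 2 ≤ N := by
      have : Nontrivial (Fin N) := ⟨⟨j, i, hji⟩⟩
      have := Fintype.one_lt_card_iff_nontrivial.mpr this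
      simp at this; omega
    rw [Nat.sub_sub, Nat.cast_sub h2]; norm_num
  · exact Finset.mem_erase.mpr ⟨hji, Finset.mem_univ j⟩

lemma cardD3 (N : ℕ) : ((D3 N).card : ℝ) = (N : ℝ) * ((N : ℝ) - 1) * ((N : ℝ) - 2) := by
  have h1 : ∑ p ∈ D3 N, (1 : ℝ) = ((D3 N).card : ℝ) := by
    rw [Finset.sum_const, nsmul_eq_mul, mul_one]
  have h2 := nest3 (N := N) (fun _ _ _ => (1 : ℝ))
  rw [h1] at h2
  rw [h2]
  have h3 : ∀ i : Fin N, ∑ j ∈ Finset.univ.filter (fun j => j ≠ i),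
      ∑ k ∈ Finset.univ.filter (fun k => k ≠ i ∧ k ≠ j), (1 : ℝ)
      = ((N : ℝ) - 1) * ((N : ℝ) - 2) := by
    intro i
    rw [Finset.sum_congr rfl (fun j hj => by
      rw [Finset.sum_const, nsmul_eq_mul, mul_one, cardB (Finset.mem_filter.mp hj).2])]
    rw [Finset.sum_const, nsmul_eq_mul, cardA]
  rw [Finset.sum_congr rfl (fun i _ => h3 i), Finset.sum_const, nsmul_eq_mul,
    Finset.card_univ, Fintype.card_fin]
  ring

lemma tripleT {N : ℕ} (x : Fin N → ℝ)
    (hs : ∀ i j : Fin N, i ≠ j → Real.sin (x i - x j) ≠ 0) :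
    ∑ p ∈ D3 N, Real.cot (x p.1 - x p.2.1) * Real.cot (x p.1 - x p.2.2)
      = -(1/3) * (N : ℝ) * ((N : ℝ) - 1) * ((N : ℝ) - 2) := by
  set G : Fin N → Fin N → Fin N → ℝ :=
    fun i j k => Real.cot (x i - x j) * Real.cot (x i - x k) with hG
  have key : ∀ p ∈ D3 N, G p.1 p.2.1 p.2.2 + G p.2.1 p.2.2 p.1 + G p.2.2 p.1 p.2.1 = -1 := by
    rintro ⟨i, j, k⟩ hp
    simp only [D3, Finset.mem_filter, Finset.mem_univ, true_and] at hp
    obtain ⟨hij, hik, hjk⟩ := hp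
    have ha := hs i j hij
    have hb := hs j k hjk
    have hab : Real.sin ((x i - x j) + (x j - x k)) ≠ 0 := by
      have : (x i - x j) + (x j - x k) = x i - x k := by ring
      rw [this]; exact hs i k hik
    have htr := cot_triple ha hb hab
    simp only [hG]
    have e1 : x i - x k = (x i - x j) + (x j - x k) := by ring
    have e2 : x j - x i = -((x i - x j)) := by ring
    have e3 : x k - x j = -((x j - x k)) := by ring
    have e4 : x k - x i = -((x i - x j) + (x j - x k)) := by ring
    rw [e1, e2, e3, e4, myCot_neg, myCot_neg, myCot_neg]
    ring_nf
    ring_nf at htr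
    linarith
  have c1 := cyc3 G
  have c2 := cyc3 (fun i j k => G j k i)
  have hsum : (∑ p ∈ D3 N, G p.1 p.2.1 p.2.2) + (∑ p ∈ D3 N, G p.1 p.2.1 p.2.2)
      + (∑ p ∈ D3 N, G p.1 p.2.1 p.2.2) = ∑ p ∈ D3 N, (-1 : ℝ) := by
    nth_rewrite 2 [c1]
    nth_rewrite 2 [c1]; nth_rewrite 2 [c2]
    rw [← Finset.sum_add_distrib, ← Finset.sum_add_distrib]
    exact Finset.sum_congr rfl key
  rw [Finset.sum_const, nsmul_eq_mul, mul_neg_one] at hsum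
  have hc := cardD3 N
  have : (3 : ℝ) * (∑ p ∈ D3 N, G p.1 p.2.1 p.2.2)
      = -((N:ℝ) * ((N:ℝ)-1) * ((N:ℝ)-2)) := by rw [← hc]; linarith
  linarith

lemma sqS {N : ℕ} (x : Fin N → ℝ)
    (hs : ∀ i j : Fin N, i ≠ j → Real.sin (x i - x j) ≠ 0) :
    ∑ i : Fin N, (∑ j ∈ Finset.univ.filter (fun j => j ≠ i), Real.cot (x i - x j)) ^ 2
      = (∑ i : Fin N, ∑ j ∈ Finset.univ.filter (fun j => j ≠ i),
            1 / Real.sin (x i - x j) ^ 2)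
        - (N : ℝ) * ((N : ℝ) - 1) - (1/3) * (N : ℝ) * ((N : ℝ) - 1) * ((N : ℝ) - 2) := by
  have expand : ∀ i : Fin N,
      (∑ j ∈ Finset.univ.filter (fun j => j ≠ i), Real.cot (x i - x j)) ^ 2
      = (∑ j ∈ Finset.univ.filter (fun j => j ≠ i), Real.cot (x i - x j) ^ 2)
        + ∑ j ∈ Finset.univ.filter (fun j => j ≠ i),
            ∑ k ∈ Finset.univ.filter (fun k => k ≠ i ∧ k ≠ j),
              Real.cot (x i - x j) * Real.cot (x i - x k) := by
    intro i
    rw [sq, Finset.sum_mul_sum]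
    rw [← Finset.sum_add_distrib]
    refine Finset.sum_congr rfl fun j hj => ?_
    have hji : j ≠ i := (Finset.mem_filter.mp hj).2
    have hBe : (Finset.univ.filter (fun k : Fin N => k ≠ i ∧ k ≠ j))
        = (Finset.univ.filter (fun k : Fin N => k ≠ i)).erase j := by
      ext k; simp [and_comm]
    have hjmem : j ∈ Finset.univ.filter (fun k : Fin N => k ≠ i) := by
      simp [hji]
    rw [hBe, ← Finset.sum_erase_add _ _ hjmem, ← sq]
    ring
  rw [Finset.sum_congr rfl fun i _ => expand i, Finset.sum_add_distrib]
  rw [← nest3 (fun i j k => Real.cot (x i - x j) * Real.cot (x i - x k)), tripleT x hs]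
  have hsq : ∑ i : Fin N, ∑ j ∈ Finset.univ.filter (fun j => j ≠ i), Real.cot (x i - x j) ^ 2
      = (∑ i : Fin N, ∑ j ∈ Finset.univ.filter (fun j => j ≠ i),
          1 / Real.sin (x i - x j) ^ 2) - (N : ℝ) * ((N : ℝ) - 1) := by
    have : ∀ i : Fin N, ∑ j ∈ Finset.univ.filter (fun j => j ≠ i), Real.cot (x i - x j) ^ 2
        = (∑ j ∈ Finset.univ.filter (fun j => j ≠ i), 1 / Real.sin (x i - x j) ^ 2)
          - ((N : ℝ) - 1) := by
      intro i
      rw [Finset.sum_congr rfl fun j hj =>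
        myCot_sq (hs i j (Ne.symm (Finset.mem_filter.mp hj).2))]
      rw [Finset.sum_sub_distrib]
      rw [Finset.sum_const]
      rw [nsmul_eq_mul]
      rw [mul_one]
      rw [cardA]
    rw [Finset.sum_congr rfl fun i _ => this i, Finset.sum_sub_distrib, Finset.sum_const,
      nsmul_eq_mul, Finset.card_univ, Fintype.card_fin]
  rw [hsq]; ring

lemma q2p {N : ℕ} (x : Fin N → ℝ) :
    ∑ i : Fin N, ∑ j ∈ Finset.univ.filter (fun j => j ≠ i), 1 / Real.sin (x i - x j) ^ 2
      = 2 * ∑ p ∈ Finset.univ.filter (fun p : Fin N × Fin N => p.1 < p.2),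
          1 / Real.sin (x p.1 - x p.2) ^ 2 := by
  set u : Fin N → Fin N → ℝ := fun i j => 1 / Real.sin (x i - x j) ^ 2 with hu
  have husymm : ∀ i j, u j i = u i j := by
    intro i j
    simp only [hu]
    have : x j - x i = -(x i - x j) := by ring
    rw [this, Real.sin_neg, neg_pow]
    norm_num
  rw [← nest2 u]
  have hsplit : (Finset.univ : Finset (Fin N × Fin N)).filter (fun p => p.1 ≠ p.2)
      = (Finset.univ.filter (fun p : Fin N × Fin N => p.1 < p.2))
        ∪ (Finset.univ.filter (fun p : Fin N × Fin N => p.2 < p.1)) := by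
    ext p
    simp only [Finset.mem_filter, Finset.mem_univ, true_and, Finset.mem_union]
    constructor
    · intro h; rcases lt_or_gt_of_ne h with h' | h'
      · exact Or.inl h'
      · exact Or.inr h'
    · rintro (h | h)
      · exact ne_of_lt h
      · exact ne_of_gt h
  have hdisj : Disjoint (Finset.univ.filter (fun p : Fin N × Fin N => p.1 < p.2))
      (Finset.univ.filter (fun p : Fin N × Fin N => p.2 < p.1)) := by
    rw [Finset.disjoint_filter]
    intro p _ h1 h2
    exact absurd h1 (not_lt_of_gt h2)
  rw [hsplit, Finset.sum_union hdisj]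
  have hswap : ∑ p ∈ Finset.univ.filter (fun p : Fin N × Fin N => p.2 < p.1), u p.1 p.2
      = ∑ p ∈ Finset.univ.filter (fun p : Fin N × Fin N => p.1 < p.2), u p.1 p.2 := by
    refine Finset.sum_nbij' Prod.swap Prod.swap ?_ ?_ ?_ ?_ ?_ <;>
      rintro ⟨a, b⟩ hp <;>
      simp only [Finset.mem_filter, Finset.mem_univ, true_and, Prod.swap] at * <;>
      first
        | exact hp
        | rfl
        | exact (husymm a b).symm
  rw [hswap]; ring

/-! ### The analytic per-coordinate reduction -/

lemma mainStep {N : ℕ} (β : ℝ) (f : (Fin N → ℝ) → ℝ) (hf : ContDiff ℝ 2 f)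
    (x : Fin N → ℝ) (hs : ∀ i j : Fin N, i ≠ j → Real.sin (x i - x j) ≠ 0) (i : Fin N) :
    pd i (fun y => pd i f y - w N β i y * f y) x
      + w N β i x * (pd i f x - w N β i x * f x)
    = pd i (pd i f) x
      + (β * ∑ j ∈ Finset.univ.filter (fun j : Fin N => j ≠ i),
          1 / Real.sin (x i - x j) ^ 2) * f x
      - (w N β i x) ^ 2 * f x := by
  classical
  set g : ℝ → ℝ := fun t => f (Function.update x i t) with hgdef
  have hg : ContDiff ℝ 2 g := hf.comp (contDiff_update 2 x i)
  have hg' := contDiff_succ_iff_deriv.mp (show ContDiff ℝ (1 + 1) g from by exact_mod_cast hg)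
  have hpdf : ∀ t : ℝ, pd i f (Function.update x i t) = deriv g t := by
    intro t
    show deriv (fun s => f (Function.update (Function.update x i t) i s))
        (Function.update x i t i) = deriv g t
    rw [Function.update_self]
    congr 1
    funext s
    rw [Function.update_idem]
  have hW : ∀ t : ℝ, w N β i (Function.update x i t)
      = β * ∑ j ∈ Finset.univ.filter (fun j : Fin N => j ≠ i), Real.cot (t - x j) := by
    intro t
    show β * _ = β * _
    congr 1
    refine Finset.sum_congr rfl fun j hj => ?_
    rw [Function.update_self, Function.update_of_ne (Finset.mem_filter.mp hj).2]
  have hWd : HasDerivAt (fun t => β * ∑ j ∈ Finset.univ.filter (fun j : Fin N => j ≠ i),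
      Real.cot (t - x j))
      (β * ∑ j ∈ Finset.univ.filter (fun j : Fin N => j ≠ i),
        -(1 / Real.sin (x i - x j) ^ 2)) (x i) := by
    refine HasDerivAt.const_mul β ?_
    refine HasDerivAt.fun_sum fun j hj => ?_
    have hj' : Real.sin (x i - x j) ≠ 0 := hs i j (Ne.symm (Finset.mem_filter.mp hj).2)
    have hinner : HasDerivAt (fun t : ℝ => t - x j) 1 (x i) := by
      simpa using (hasDerivAt_id (x i)).sub_const (x j)
    have := (myHasDerivAt_cot hj').comp (x i) hinner
    simpa [Function.comp_def] using this
  have hgd1 : HasDerivAt g (deriv g (x i)) (x i) := (hg'.1 (x i)).hasDerivAt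
  have hgd2 : HasDerivAt (deriv g) (deriv (deriv g) (x i)) (x i) :=
    ((hg'.2.2.differentiable one_ne_zero) (x i)).hasDerivAt
  have hfun : (fun t => (fun y => pd i f y - w N β i y * f y) (Function.update x i t))
      = fun t => deriv g t - (β * ∑ j ∈ Finset.univ.filter (fun j : Fin N => j ≠ i),
          Real.cot (t - x j)) * g t := by
    funext t
    simp only [hpdf t, hW t]; rfl
  have hprod := hWd.mul hgd1
  have hder := (hgd2.sub hprod).deriv
  have hLHS : pd i (fun y => pd i f y - w N β i y * f y) x
      = deriv (deriv g) (x i)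
        - ((β * ∑ j ∈ Finset.univ.filter (fun j : Fin N => j ≠ i),
            -(1 / Real.sin (x i - x j) ^ 2)) * g (x i)
          + (β * ∑ j ∈ Finset.univ.filter (fun j : Fin N => j ≠ i),
            Real.cot (x i - x j)) * deriv g (x i)) := by
    show deriv (fun t => (fun y => pd i f y - w N β i y * f y) (Function.update x i t)) (x i) = _
    rw [hfun]
    exact hder
  have hgx : g (x i) = f x := by rw [hgdef]; simp [Function.update_eq_self]
  have hpdfx : pd i f x = deriv g (x i) := rfl
  have hpdpd : pd i (pd i f) x = deriv (deriv g) (x i) := by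
    show deriv (fun t => pd i f (Function.update x i t)) (x i) = _
    congr 1
    funext t
    exact hpdf t
  have hwx : w N β i x = β * ∑ j ∈ Finset.univ.filter (fun j : Fin N => j ≠ i),
      Real.cot (x i - x j) := rfl
  rw [hLHS, hgx, hpdpd, hwx, hpdfx]
  rw [Finset.sum_neg_distrib]
  ring

theorem stmt_13 (N : ℕ) (β : ℝ) (f : (Fin N → ℝ) → ℝ) (hf : ContDiff ℝ 2 f)
    (x : Fin N → ℝ)
    (hx : ∀ i j : Fin N, i ≠ j → ∀ m : ℤ, x i - x j ≠ m * Real.pi) :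
    -(1 / 2) * (∑ i : Fin N,
        (pd i (fun y => pd i f y - w N β i y * f y) x
          + w N β i x * (pd i f x - w N β i x * f x)))
      = -(1 / 2) * (∑ i : Fin N, pd i (pd i f) x)
        + β * (β - 1) * (∑ p ∈ Finset.univ.filter (fun p : Fin N × Fin N => p.1 < p.2),
            f x / Real.sin (x p.1 - x p.2) ^ 2)
        - (1 / 6) * β ^ 2 * (N : ℝ) * ((N : ℝ) + 1) * ((N : ℝ) - 1) * f x := by
  classical
  have hs : ∀ i j : Fin N, i ≠ j → Real.sin (x i - x j) ≠ 0 := by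
    intro i j hij
    rw [Real.sin_ne_zero_iff]
    intro n
    exact fun h => hx i j hij n h.symm
  rw [Finset.sum_congr rfl fun i _ => mainStep β f hf x hs i]
  rw [Finset.sum_sub_distrib, Finset.sum_add_distrib]
  set Q : ℝ := ∑ i : Fin N, ∑ j ∈ Finset.univ.filter (fun j => j ≠ i),
      1 / Real.sin (x i - x j) ^ 2 with hQdef
  set P : ℝ := ∑ p ∈ Finset.univ.filter (fun p : Fin N × Fin N => p.1 < p.2),
      1 / Real.sin (x p.1 - x p.2) ^ 2 with hPdef
  have hQ1 : ∑ i : Fin N, (β * ∑ j ∈ Finset.univ.filter (fun j : Fin N => j ≠ i),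
      1 / Real.sin (x i - x j) ^ 2) * f x = β * Q * f x := by
    rw [← Finset.sum_mul, ← Finset.mul_sum]
  have hQ2 : ∑ i : Fin N, (w N β i x) ^ 2 * f x
      = β ^ 2 * (∑ i : Fin N, (∑ j ∈ Finset.univ.filter (fun j => j ≠ i),
          Real.cot (x i - x j)) ^ 2) * f x := by
    rw [← Finset.sum_mul, Finset.mul_sum]
    congr 1
    refine Finset.sum_congr rfl fun i _ => ?_
    have : w N β i x = β * ∑ j ∈ Finset.univ.filter (fun j => j ≠ i),
        Real.cot (x i - x j) := rfl
    rw [this, mul_pow]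
  have hS := sqS x hs
  have hQ2P : Q = 2 * P := q2p x
  have hPf : ∑ p ∈ Finset.univ.filter (fun p : Fin N × Fin N => p.1 < p.2),
      f x / Real.sin (x p.1 - x p.2) ^ 2 = f x * P := by
    rw [hPdef, Finset.mul_sum]
    exact Finset.sum_congr rfl fun p _ => (mul_one_div _ _).symm
  rw [hQ1, hQ2, hS, hPf, ← hQdef, hQ2P]
  ring
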